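/- Let K be a field, let r ≥ 1 and n, m ≥ 0, and let S = K[x_0,…,x_n,y_0,…,y_m]. Let B = [X_{r,r+n} | Y_{r,r+m}] be the r × (2r+n+m) matrix over S formed by horizontal concatenation, and let A = [Y_{r+n,r+n+m} ; −X_{r+m,r+m+n}] be the (2r+n+m) × (r+n+m) matrix over S formed by vertical concatenation. Then: (i) B·A = 0; (ii) for every (x,y) ∈ K^{n+1} × K^{m+1} with (x,y) ≠ 0, the evaluated matrix B(x,y) has rank r; (iii) at the point x* = (1,0,…,0) ∈ K^{n+1}, y* = (0,…,0,1) ∈ K^{m+1}, the evaluated matrix A(x*,y*) has rank r+n+m. In particular A and B define a monad O_{P^N}(−1)^{r+n+m} →^α O_{P^N}^{2r+n+m} →^β O_{P^N}(1)^r on P^N with N = n+m+1. -/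

import Mathlib

/-- The `p × (p + n)` banded matrix whose `(i,j)` entry is `x (j - i)` if
`0 ≤ j - i ≤ n` and `0` otherwise. -/
def bandedMatrix {R : Type*} [CommRing R] (p n : ℕ) (x : Fin (n + 1) → R) :
    Matrix (Fin p) (Fin (p + n)) R :=
  fun i j =>
    if h : (i : ℕ) ≤ (j : ℕ) ∧ (j : ℕ) - (i : ℕ) ≤ n then
      x ⟨(j : ℕ) - (i : ℕ), Nat.lt_succ_of_le h.2⟩
    else 0

/-- The banded matrix `X_{p,p+n}` in the variables `x_0, …, x_n` of
`S = K[x_0, …, x_n, y_0, …, y_m]`. -/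
noncomputable def Xmat (K : Type*) [Field K] (n m p : ℕ) :
    Matrix (Fin p) (Fin (p + n)) (MvPolynomial (Fin (n + 1) ⊕ Fin (m + 1)) K) :=
  bandedMatrix p n (fun i => MvPolynomial.X (Sum.inl i))

/-- The banded matrix `Y_{p,p+m}` in the variables `y_0, …, y_m` of
`S = K[x_0, …, x_n, y_0, …, y_m]`. -/
noncomputable def Ymat (K : Type*) [Field K] (n m p : ℕ) :
    Matrix (Fin p) (Fin (p + m)) (MvPolynomial (Fin (n + 1) ⊕ Fin (m + 1)) K) :=
  bandedMatrix p m (fun j => MvPolynomial.X (Sum.inr j))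

def extCoeff {R : Type*} [CommRing R] (n : ℕ) (x : Fin (n + 1) → R) : ℕ → R :=
  fun a => if h : a ≤ n then x ⟨a, Nat.lt_succ_of_le h⟩ else 0

lemma bandedMatrix_apply' {R : Type*} [CommRing R] (p n : ℕ) (x : Fin (n + 1) → R)
    (i : Fin p) (j : Fin (p + n)) :
    bandedMatrix p n x i j =
      if (i : ℕ) ≤ (j : ℕ) then extCoeff n x ((j : ℕ) - (i : ℕ)) else 0 := by
  unfold bandedMatrix extCoeff
  by_cases h1 : (i : ℕ) ≤ (j : ℕ)
  · by_cases h2 : (j : ℕ) - (i : ℕ) ≤ n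
    · rw [dif_pos ⟨h1, h2⟩, if_pos h1, dif_pos h2]
    · rw [dif_neg (by tauto), if_pos h1, dif_neg h2]
  · rw [dif_neg (by tauto), if_neg h1]

lemma bandInnerSum {R : Type*} [CommRing R] (m : ℕ) (y : Fin (m + 1) → R)
    (u : R) (c kk : ℕ) :
    (∑ b ∈ Finset.range (m + 1), if c + b = kk then u * extCoeff m y b else 0)
      = u * (if c ≤ kk then extCoeff m y (kk - c) else 0) := by
  by_cases hc : c ≤ kk
  · by_cases hb : kk - c ≤ m
    · rw [Finset.sum_eq_single (kk - c)]
      · rw [if_pos (by omega), if_pos hc]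
      · intro b _ hbne
        rw [if_neg (by omega)]
      · intro habs
        exact absurd (Finset.mem_range.mpr (by omega)) habs
    · rw [Finset.sum_eq_zero, if_pos hc, extCoeff]
      · rw [dif_neg (by omega), mul_zero]
      · intro b hb
        rw [Finset.mem_range] at hb
        rw [if_neg (by omega)]
  · rw [Finset.sum_eq_zero, if_neg hc, mul_zero]
    intro b hb
    rw [if_neg (by omega)]

lemma band_mul {R : Type*} [CommRing R] (p n m : ℕ) (x : Fin (n + 1) → R)
    (y : Fin (m + 1) → R) (i : Fin p) (kc : Fin (p + n + m)) :
    (∑ j : Fin (p + n), bandedMatrix p n x i j * bandedMatrix (p + n) m y j kc)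
      = ∑ a ∈ Finset.range (n + 1), ∑ b ∈ Finset.range (m + 1),
          (if (i : ℕ) + a + b = (kc : ℕ) then extCoeff n x a * extCoeff m y b else 0) := by
  set kk := (kc : ℕ) with hkk
  set F : ℕ → R := fun j =>
    (if (i : ℕ) ≤ j then extCoeff n x (j - (i : ℕ)) else 0) *
    (if j ≤ kk then extCoeff m y (kk - j) else 0) with hF
  have h1 : (∑ j : Fin (p + n), bandedMatrix p n x i j * bandedMatrix (p + n) m y j kc)
      = ∑ j ∈ Finset.range (p + n), F j := by
    rw [← Fin.sum_univ_eq_sum_range]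
    refine Finset.sum_congr rfl fun j _ => ?_
    rw [bandedMatrix_apply', bandedMatrix_apply', hF]
  rw [h1]
  have hip : (i : ℕ) < p := i.isLt
  have hsub : Finset.Ico (i : ℕ) ((i : ℕ) + n + 1) ⊆ Finset.range (p + n) := by
    intro t ht
    rw [Finset.mem_Ico] at ht
    rw [Finset.mem_range]
    omega
  have hzero : ∀ t ∈ Finset.range (p + n), t ∉ Finset.Ico (i : ℕ) ((i : ℕ) + n + 1) →
      F t = 0 := by
    intro t ht hts
    rw [Finset.mem_range] at ht
    rw [Finset.mem_Ico] at hts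
    simp only [hF]
    by_cases h : (i : ℕ) ≤ t
    · rw [if_pos h, extCoeff, dif_neg (by omega), zero_mul]
    · rw [if_neg h, zero_mul]
  rw [← Finset.sum_subset hsub hzero, Finset.sum_Ico_eq_sum_range,
    show (i : ℕ) + n + 1 - (i : ℕ) = n + 1 by omega]
  refine Finset.sum_congr rfl fun a ha => ?_
  rw [Finset.mem_range] at ha
  have hFa : F ((i : ℕ) + a)
      = extCoeff n x a * (if (i : ℕ) + a ≤ kk then extCoeff m y (kk - ((i : ℕ) + a)) else 0) := by
    simp only [hF]
    rw [if_pos (by omega), Nat.add_sub_cancel_left]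
  rw [hFa, ← bandInnerSum m y (extCoeff n x a) ((i : ℕ) + a) kk]

theorem rank_submatrix_rows_le' {K : Type*} [Field K] {l m n : Type*}
    [Fintype l] [Fintype m] [Fintype n]
    (A : Matrix m n K) (f : l → m) :
    (A.submatrix f (Equiv.refl n)).rank ≤ A.rank := by
  rw [Matrix.rank, Matrix.rank, Matrix.mulVecLin_submatrix, LinearMap.range_comp]
  have h : LinearMap.funLeft K K ⇑(Equiv.refl n).symm = LinearMap.id := by
    ext v i; rfl
  rw [h, LinearMap.comp_id]
  exact Submodule.finrank_map_le _ _

theorem le_rank_of_banded {K : Type*} [Field K] {p n : ℕ} {ι : Type*} [Fintype ι]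
    [DecidableEq ι]
    (M : Matrix (Fin p) ι K) (x : Fin (n + 1) → K) (hx : x ≠ 0)
    (g : Fin (p + n) → ι)
    (hg : ∀ (i : Fin p) (j : Fin (p + n)), M i (g j) = bandedMatrix p n x i j) :
    p ≤ M.rank := by
  classical
  have hex : ∃ k : ℕ, ∃ h : k < n + 1, x ⟨k, h⟩ ≠ 0 := by
    by_contra hcon
    push_neg at hcon
    apply hx
    funext t
    simpa using hcon t.1 t.2
  set a := Nat.find hex with hadef
  obtain ⟨ha, hxa⟩ := Nat.find_spec hex
  have hmin : ∀ k, k < a → ∀ h : k < n + 1, x ⟨k, h⟩ = 0 := by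
    intro k hk h
    by_contra hne
    exact Nat.find_min hex hk ⟨h, hne⟩
  have han : a ≤ n := by omega
  set f : Fin p → Fin (p + n) := fun i' => ⟨a + (i' : ℕ), by have := i'.isLt; omega⟩ with hfdef
  set N : Matrix (Fin p) (Fin p) K := M.submatrix id (g ∘ f) with hNdef
  have hN : ∀ i i', N i i' = bandedMatrix p n x i (f i') := fun i i' => hg i (f i')
  have hfv : ∀ i' : Fin p, ((f i') : ℕ) = a + (i' : ℕ) := fun _ => rfl
  have htri : N.BlockTriangular id := by
    intro i i' hlt
    have hlt' : (i' : ℕ) < (i : ℕ) := hlt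
    rw [hN, bandedMatrix_apply']
    by_cases hc : (i : ℕ) ≤ ((f i') : ℕ)
    · rw [if_pos hc, extCoeff]
      have hv := hfv i'
      rw [dif_pos (by omega)]
      exact hmin _ (by omega) _
    · rw [if_neg hc]
  have hdiag : ∀ i : Fin p, N i i = x ⟨a, ha⟩ := by
    intro i
    rw [hN, bandedMatrix_apply']
    have hv := hfv i
    rw [if_pos (by omega), extCoeff, dif_pos (by omega)]
    congr 1
    rw [Fin.mk.injEq]
    omega
  have hdet : N.det = x ⟨a, ha⟩ ^ p := by
    rw [Matrix.det_of_upperTriangular htri,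
      Finset.prod_congr rfl (fun i _ => hdiag i), Finset.prod_const,
      Finset.card_univ, Fintype.card_fin]
  have hunit : IsUnit N := by
    rw [Matrix.isUnit_iff_isUnit_det, hdet]
    exact (pow_ne_zero _ hxa).isUnit
  have hrankN : N.rank = p := by
    rw [Matrix.rank_of_isUnit N hunit, Fintype.card_fin]
  have h2 : N.transpose = M.transpose.submatrix (g ∘ f) (Equiv.refl (Fin p)) := by
    ext i j; rfl
  calc p = N.rank := hrankN.symm
    _ = N.transpose.rank := (Matrix.rank_transpose N).symm
    _ = (M.transpose.submatrix (g ∘ f) (Equiv.refl (Fin p))).rank := by rw [h2]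
    _ ≤ M.transpose.rank := rank_submatrix_rows_le' _ _
    _ = M.rank := Matrix.rank_transpose M

lemma extCoeff_delta0 {K : Type*} [Field K] (n t : ℕ) :
    extCoeff n (fun i : Fin (n + 1) => if i = 0 then (1 : K) else 0) t
      = if t = 0 then 1 else 0 := by
  unfold extCoeff
  by_cases h : t ≤ n
  · rw [dif_pos h]
    by_cases h0 : t = 0 <;> simp [h0, Fin.ext_iff]
  · rw [dif_neg h, if_neg (by omega)]

lemma extCoeff_deltaLast {K : Type*} [Field K] (m t : ℕ) :
    extCoeff m (fun j : Fin (m + 1) => if j = Fin.last m then (1 : K) else 0) t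
      = if t = m then 1 else 0 := by
  unfold extCoeff
  by_cases h : t ≤ m
  · rw [dif_pos h]
    by_cases h0 : t = m <;> simp [h0, Fin.ext_iff]
  · rw [dif_neg h, if_neg (by omega)]

lemma Xmat_map {K : Type*} [Field K] (n m p : ℕ) (x : Fin (n + 1) → K)
    (y : Fin (m + 1) → K) :
    (Xmat K n m p).map (MvPolynomial.eval (Sum.elim x y)) = bandedMatrix p n x := by
  ext i j
  simp only [Matrix.map_apply, Xmat, bandedMatrix,
    apply_dite (MvPolynomial.eval (Sum.elim x y)), MvPolynomial.eval_X, Sum.elim_inl, map_zero]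

lemma Ymat_map {K : Type*} [Field K] (n m p : ℕ) (x : Fin (n + 1) → K)
    (y : Fin (m + 1) → K) :
    (Ymat K n m p).map (MvPolynomial.eval (Sum.elim x y)) = bandedMatrix p m y := by
  ext i j
  simp only [Matrix.map_apply, Ymat, bandedMatrix,
    apply_dite (MvPolynomial.eval (Sum.elim x y)), MvPolynomial.eval_X, Sum.elim_inr, map_zero]

/-- `B = [X_{r,r+n} | Y_{r,r+m}]` and `A = [Y_{r+n,r+n+m} ; -X_{r+m,r+m+n}]` satisfy
`B · A = 0`; `B` has rank `r` at every nonzero point `(x,y)`; and `A` has full column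
rank `r+n+m` at the point `x* = (1,0,…,0)`, `y* = (0,…,0,1)`.  Hence `A` and `B` define
a monad `O(-1)^{r+n+m} → O^{2r+n+m} → O(1)^r` on `P^N`, `N = n+m+1`. -/
theorem monad_construction (K : Type*) [Field K] (r n m : ℕ) (hr : 1 ≤ r) :
    let B : Matrix (Fin r) (Fin (r + n) ⊕ Fin (r + m))
        (MvPolynomial (Fin (n + 1) ⊕ Fin (m + 1)) K) :=
      Matrix.fromCols (Xmat K n m r) (Ymat K n m r)
    let A : Matrix (Fin (r + n) ⊕ Fin (r + m)) (Fin (r + n + m))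
        (MvPolynomial (Fin (n + 1) ⊕ Fin (m + 1)) K) :=
      Matrix.fromRows (Ymat K n m (r + n))
        ((-(Xmat K n m (r + m))).submatrix id
          (Fin.cast (show r + n + m = r + m + n by omega)))
    B * A = 0 ∧
    (∀ (x : Fin (n + 1) → K) (y : Fin (m + 1) → K), ¬(x = 0 ∧ y = 0) →
      (B.map (MvPolynomial.eval (Sum.elim x y))).rank = r) ∧
    (A.map (MvPolynomial.eval (Sum.elim
        (fun i : Fin (n + 1) => if i = 0 then (1 : K) else 0)
        (fun j : Fin (m + 1) => if j = Fin.last m then (1 : K) else 0)))).rank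
      = r + n + m := by
  intro B A
  refine ⟨?_, ?_, ?_⟩
  · -- B * A = 0
    rw [← Matrix.ext_iff]
    intro i k
    rw [Matrix.mul_apply, Matrix.zero_apply, Fintype.sum_sum_type]
    simp only [B, A, Matrix.fromCols_apply_inl, Matrix.fromCols_apply_inr,
      Matrix.fromRows_apply_inl, Matrix.fromRows_apply_inr, Matrix.submatrix_apply,
      Matrix.neg_apply, id_eq, mul_neg, Xmat, Ymat]
    rw [Finset.sum_neg_distrib, add_neg_eq_zero]
    rw [band_mul r n m _ _ i k, band_mul r m n _ _ i (Fin.cast (by omega) k)]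
    conv_rhs => rw [Finset.sum_comm]
    refine Finset.sum_congr rfl fun a _ => Finset.sum_congr rfl fun b _ => ?_
    exact if_congr (by rw [Fin.coe_cast]; omega) (mul_comm _ _) rfl
  · -- rank B = r at nonzero points
    intro x y hxy
    have hBmap : B.map (MvPolynomial.eval (Sum.elim x y))
        = Matrix.fromCols (bandedMatrix r n x) (bandedMatrix r m y) := by
      ext i j
      cases j with
      | inl j =>
        rw [Matrix.map_apply]
        simp only [B, Matrix.fromCols_apply_inl]
        exact congrFun (congrFun (Xmat_map n m r x y) i) j
      | inr j =>
        rw [Matrix.map_apply]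
        simp only [B, Matrix.fromCols_apply_inr]
        exact congrFun (congrFun (Ymat_map n m r x y) i) j
    apply le_antisymm
    · simpa using Matrix.rank_le_card_height (B.map (MvPolynomial.eval (Sum.elim x y)))
    · by_cases hx : x = 0
      · have hy : y ≠ 0 := fun h => hxy ⟨hx, h⟩
        refine le_rank_of_banded _ y hy Sum.inr ?_
        intro i j
        rw [hBmap, Matrix.fromCols_apply_inr]
      · refine le_rank_of_banded _ x hx Sum.inl ?_
        intro i j
        rw [hBmap, Matrix.fromCols_apply_inl]
  · -- rank A = r + n + m at the special point
    set ev := MvPolynomial.eval (Sum.elim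
        (fun i : Fin (n + 1) => if i = 0 then (1 : K) else 0)
        (fun j : Fin (m + 1) => if j = Fin.last m then (1 : K) else 0)) with hev
    have hXe : ∀ (j : Fin (r + m)) (c : Fin (r + m + n)),
        ev (Xmat K n m (r + m) j c) = bandedMatrix (r + m) n
          (fun i : Fin (n + 1) => if i = 0 then (1 : K) else 0) j c :=
      fun j c => congrFun (congrFun (Xmat_map n m (r + m) _ _) j) c
    have hYe : ∀ (j : Fin (r + n)) (c : Fin (r + n + m)),
        ev (Ymat K n m (r + n) j c) = bandedMatrix (r + n) m
          (fun j : Fin (m + 1) => if j = Fin.last m then (1 : K) else 0) j c :=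
      fun j c => congrFun (congrFun (Ymat_map n m (r + n) _ _) j) c
    set d : Fin (r + n + m) → K := fun k => if (k : ℕ) < r + m then -1 else 1 with hd
    set g : Fin (r + n + m) → (Fin (r + n) ⊕ Fin (r + m)) := fun k =>
      if h : (k : ℕ) < r + m then Sum.inr ⟨(k : ℕ), h⟩
      else Sum.inl ⟨(k : ℕ) - m, by have := k.isLt; omega⟩ with hg
    have hS : (A.map ev).submatrix g (Equiv.refl (Fin (r + n + m))) = Matrix.diagonal d := by
      ext k k'
      rw [Matrix.submatrix_apply, Equiv.refl_apply, Matrix.map_apply, Matrix.diagonal_apply]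
      have hk := k.isLt
      have hk' := k'.isLt
      by_cases h : (k : ℕ) < r + m
      · have hgk : g k = Sum.inr ⟨(k : ℕ), h⟩ := by simp only [hg]; rw [dif_pos h]
        rw [hgk]
        simp only [A, Matrix.fromRows_apply_inr, Matrix.submatrix_apply,
          Matrix.neg_apply, id_eq, map_neg]
        rw [hXe, bandedMatrix_apply']
        simp only [Fin.coe_cast, extCoeff_delta0, hd]
        simp only [Fin.ext_iff]
        split_ifs <;> first | rfl | omega | norm_num | (exfalso; omega)
      · have hgk : g k = Sum.inl ⟨(k : ℕ) - m, by omega⟩ := by simp only [hg]; rw [dif_neg h]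
        rw [hgk]
        simp only [A, Matrix.fromRows_apply_inl]
        rw [hYe, bandedMatrix_apply']
        simp only [extCoeff_deltaLast, hd]
        simp only [Fin.ext_iff]
        split_ifs <;> first | rfl | omega | norm_num | (exfalso; omega)
    have hdet : (Matrix.diagonal d).det ≠ 0 := by
      rw [Matrix.det_diagonal]
      refine Finset.prod_ne_zero_iff.mpr fun k _ => ?_
      simp only [hd]
      split_ifs
      · exact neg_ne_zero.mpr one_ne_zero
      · exact one_ne_zero
    have hrankD : (Matrix.diagonal d).rank = r + n + m := by
      rw [Matrix.rank_of_isUnit _ ((Matrix.isUnit_iff_isUnit_det _).mpr hdet.isUnit),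
        Fintype.card_fin]
    apply le_antisymm
    · simpa using Matrix.rank_le_card_width (A.map ev)
    · calc r + n + m = (Matrix.diagonal d).rank := hrankD.symm
        _ = ((A.map ev).submatrix g (Equiv.refl (Fin (r + n + m)))).rank := by rw [hS]
        _ ≤ (A.map ev).rank := rank_submatrix_rows_le' _ _
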